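/- Under the hypotheses of the initial-algebra theorem (K an O-category with strict morphisms and initial object, F locally continuous, κ : Φ ⇒ A an O-colimit of ⊥ → F⊥ → F²⊥ → ⋯), (A, unfold) with unfold = ⊔_n F(κ_n) ∘ κ_{n+1}^p is a terminal F-coalgebra: for every F-coalgebra (B, b : B → F B), the morphism ρ = ⊔_n κ_n ∘ β_n, where β₀ = (⊥_B)^p and β_{n+1} = F β_n ∘ b, is the unique morphism B → A with unfold ∘ ρ = F ρ ∘ b. -/

import Mathlib

open CategoryTheory OmegaCompletePartialOrder

universe v u

class OHom (K : Type u) [Category.{v} K] where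
  homOrder : ∀ X Y : K, OmegaCompletePartialOrder (X ⟶ Y)

attribute [instance] OHom.homOrder

/-- An O-category: a category enriched in dcpos with continuous composition. -/
class OCat (K : Type u) [Category.{v} K] extends OHom K where
  comp_mono : ∀ {X Y Z : K} {f f' : X ⟶ Y} {g g' : Y ⟶ Z},
    f ≤ f' → g ≤ g' → f ≫ g ≤ f' ≫ g'
  comp_cont_left : ∀ {X Y Z : K} (g : Y ⟶ Z) (c : Chain (X ⟶ Y))
    (hm : Monotone fun n => c n ≫ g),
    ωSup c ≫ g = ωSup ⟨fun n => c n ≫ g, hm⟩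
  comp_cont_right : ∀ {X Y Z : K} (f : X ⟶ Y) (c : Chain (Y ⟶ Z))
    (hm : Monotone fun n => f ≫ c n),
    f ≫ ωSup c = ωSup ⟨fun n => f ≫ c n, hm⟩

/-- Iterated application of an endofunctor to an object: `pob F X n = Fⁿ X`. -/
def pob {K : Type u} [Category.{v} K] (F : K ⥤ K) (X : K) : ℕ → K
  | 0 => X
  | n + 1 => F.obj (pob F X n)

/-- The links `Fⁿ k : Fⁿ X ⟶ Fⁿ⁺¹ X` of the ω-chain generated by a first link
`k : X ⟶ F X`. -/
def plink {K : Type u} [Category.{v} K] (F : K ⥤ K) {X : K} (k : X ⟶ F.obj X) :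
    ∀ n, pob F X n ⟶ pob F X (n + 1)
  | 0 => k
  | n + 1 => F.map (plink F k n)

/-- Under the hypotheses of the initial-algebra theorem, (A, unfold)
with unfold = ⊔ₙ F(κ_n) ∘ κ_{n+1}^p is a terminal F-coalgebra: for every F-coalgebra
(B, b), the morphism ρ = ⊔ₙ κ_n ∘ β_n (with β₀ = (⊥_B)^p = 0_{B⊥},
β_{n+1} = F β_n ∘ b) is the unique morphism with unfold ∘ ρ = F ρ ∘ b. -/
theorem terminal_coalgebra {K : Type u} [Category.{v} K] [OCat K]
    (bot : K) (ι : ∀ A : K, bot ⟶ A) (hinit : ∀ (A : K) (f : bot ⟶ A), f = ι A)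
    (z : ∀ X Y : K, X ⟶ Y)
    (hz₁ : ∀ {X Y Z : K} (f : X ⟶ Y), f ≫ z Y Z = z X Z)
    (hz₂ : ∀ {X Y Z : K} (g : Y ⟶ Z), z X Y ≫ g = z X Z)
    (hstrict : ∀ {X Y : K} (f : X ⟶ Y), z X Y ≤ f)
    (F : K ⥤ K)
    (hFmono : ∀ {X Y : K} {f g : X ⟶ Y}, f ≤ g → F.map f ≤ F.map g)
    (hFcont : ∀ {X Y : K} (c : Chain (X ⟶ Y))
      (hm : Monotone fun n => F.map (c n)),
      F.map (ωSup c) = ωSup ⟨fun n => F.map (c n), hm⟩)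
    (A : K) (κ : ∀ n, pob F bot n ⟶ A) (κp : ∀ n, A ⟶ pob F bot n)
    (hcocone : ∀ n, plink F (ι (F.obj bot)) n ≫ κ (n + 1) = κ n)
    (hκ₁ : ∀ n, κ n ≫ κp n = 𝟙 (pob F bot n)) (hκ₂ : ∀ n, κp n ≫ κ n ≤ 𝟙 A)
    (hκmono : Monotone fun n => κp n ≫ κ n)
    (hκsup : ωSup ⟨fun n => κp n ≫ κ n, hκmono⟩ = 𝟙 A)
    (B : K) (b : B ⟶ F.obj B)
    (β : ∀ n, B ⟶ pob F bot n)
    (hβ₀ : β 0 = z B bot) (hβs : ∀ n, β (n + 1) = b ≫ F.map (β n)) :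
    ∀ (hu : Monotone fun n => κp (n + 1) ≫ F.map (κ n))
      (hρ : Monotone fun n => β n ≫ κ n),
      (ωSup ⟨fun n => β n ≫ κ n, hρ⟩ ≫ ωSup ⟨fun n => κp (n + 1) ≫ F.map (κ n), hu⟩
          = b ≫ F.map (ωSup ⟨fun n => β n ≫ κ n, hρ⟩)) ∧
      (∀ ψ : B ⟶ A,
        ψ ≫ ωSup ⟨fun n => κp (n + 1) ≫ F.map (κ n), hu⟩ = b ≫ F.map ψ →
        ψ = ωSup ⟨fun n => β n ≫ κ n, hρ⟩) := by
  intro hu hρ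
  have plink_succ : ∀ n, plink F (ι (F.obj bot)) (n + 1)
      = F.map (plink F (ι (F.obj bot)) n) := fun n => rfl
  -- cancel `κ n ≫ κp n` on the left
  have hk1 : ∀ (n) {X : K} (f : pob F bot n ⟶ X), κ n ≫ κp n ≫ f = f := by
    intro n X f
    rw [← Category.assoc, hκ₁, Category.id_comp]
  -- every morphism into `bot` is zero
  have hbot : ∀ {X : K} (f : X ⟶ bot), f = z X bot := by
    intro X f
    have h1 : 𝟙 bot = z bot bot :=
      (hinit bot (𝟙 bot)).trans (hinit bot (z bot bot)).symm
    calc f = f ≫ 𝟙 bot := (Category.comp_id f).symm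
      _ = f ≫ z bot bot := by rw [h1]
      _ = z X bot := hz₁ f
  -- idempotence and absorption of the projections e_n = κp n ≫ κ n
  have he_idem : ∀ n, (κp n ≫ κ n) ≫ (κp n ≫ κ n) = κp n ≫ κ n := by
    intro n
    rw [Category.assoc, hk1]
  have he₁ : ∀ {n m : ℕ}, n ≤ m →
      (κp n ≫ κ n) ≫ (κp m ≫ κ m) = κp n ≫ κ n := by
    intro n m h
    refine le_antisymm ?_ ?_
    · calc (κp n ≫ κ n) ≫ (κp m ≫ κ m) ≤ (κp n ≫ κ n) ≫ 𝟙 A :=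
        OCat.comp_mono le_rfl (hκ₂ m)
      _ = κp n ≫ κ n := Category.comp_id _
    · calc κp n ≫ κ n = (κp n ≫ κ n) ≫ (κp n ≫ κ n) := (he_idem n).symm
      _ ≤ (κp n ≫ κ n) ≫ (κp m ≫ κ m) := OCat.comp_mono le_rfl (hκmono h)
  -- κ n absorbs later projections
  have hi : ∀ {n m : ℕ}, n ≤ m → κ n ≫ κp m ≫ κ m = κ n := by
    intro n m h
    have h2 := congrArg (fun t => κ n ≫ t) (he₁ h)
    simpa only [Category.assoc, hk1] using h2
  -- the links as embedding composites
  have hlink : ∀ n, κ n ≫ κp (n + 1) = plink F (ι (F.obj bot)) n := by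
    intro n
    rw [← hcocone n, Category.assoc, hκ₁, Category.comp_id]
  -- sections and retractions between levels
  have hsec : ∀ {n m : ℕ}, n ≤ m →
      (κ n ≫ κp m) ≫ (κ m ≫ κp n) = 𝟙 (pob F bot n) := by
    intro n m h
    have h2 := congrArg (fun t => t ≫ κp n) (hi h)
    simpa only [Category.assoc, hκ₁] using h2
  have hretr : ∀ n m : ℕ,
      (κ m ≫ κp n) ≫ (κ n ≫ κp m) ≤ 𝟙 (pob F bot m) := by
    intro n m
    calc (κ m ≫ κp n) ≫ (κ n ≫ κp m)
        = κ m ≫ (κp n ≫ κ n) ≫ κp m := by simp only [Category.assoc]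
      _ ≤ κ m ≫ 𝟙 A ≫ κp m := OCat.comp_mono le_rfl (OCat.comp_mono (hκ₂ n) le_rfl)
      _ = 𝟙 (pob F bot m) := by rw [Category.id_comp, hκ₁]
  -- key lemma, embedding case: F (κ n ≫ κp (n+d)) = κ (n+1) ≫ κp (n+d+1)
  have hemb : ∀ (d n : ℕ),
      F.map (κ n ≫ κp (n + d)) = κ (n + 1) ≫ κp (n + d + 1) := by
    intro d
    induction d with
    | zero =>
      intro n
      simp only [Nat.add_zero, hκ₁]
      rw [F.map_id]
      rfl
    | succ d ih =>
      intro n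
      have hstep : κ n ≫ κp (n + d) ≫ κ (n + d) ≫ κp (n + d + 1)
          = κ n ≫ κp (n + d + 1) := by
        have h2 := congrArg (fun t => t ≫ κp (n + d + 1)) (hi (Nat.le_add_right n d))
        simpa only [Category.assoc] using h2
      have hstep2 : κ (n + 1) ≫ κp (n + d + 1) ≫ κ (n + d + 1) ≫ κp (n + d + 2)
          = κ (n + 1) ≫ κp (n + d + 2) := by
        have h2 := congrArg (fun t => t ≫ κp (n + d + 2))
          (hi (Nat.succ_le_succ (Nat.le_add_right n d)))
        simpa only [Category.assoc] using h2
      calc F.map (κ n ≫ κp (n + d + 1))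
          = F.map (κ n ≫ κp (n + d) ≫ κ (n + d) ≫ κp (n + d + 1)) := by rw [hstep]
        _ = F.map ((κ n ≫ κp (n + d)) ≫ plink F (ι (F.obj bot)) (n + d)) := by
            rw [← hlink (n + d)]; simp only [Category.assoc]
        _ = F.map (κ n ≫ κp (n + d)) ≫ F.map (plink F (ι (F.obj bot)) (n + d)) :=
            F.map_comp _ _
        _ = ((κ (n + 1) ≫ κp (n + d + 1)) ≫ plink F (ι (F.obj bot)) (n + d + 1) :
              F.obj (pob F bot n) ⟶ F.obj (pob F bot (n + d + 1))) := by
            rw [ih n]; rfl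
        _ = (κ (n + 1) ≫ κp (n + d + 2) : F.obj (pob F bot n) ⟶ F.obj (pob F bot (n + d + 1))) := by
            erw [← hlink (n + d + 1)]; exact (Category.assoc _ _ _).trans hstep2
  -- key lemma in general: F (κ m ≫ κp n) = κ (m+1) ≫ κp (n+1)
  have hGen : ∀ m n : ℕ, F.map (κ m ≫ κp n) = κ (m + 1) ≫ κp (n + 1) := by
    intro m n
    rcases le_total m n with h | h
    · obtain ⟨d, rfl⟩ := Nat.exists_eq_add_of_le h
      exact hemb d m
    · obtain ⟨d, rfl⟩ := Nat.exists_eq_add_of_le h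
      -- m = n + d ≥ n : projection case, by uniqueness of projections
      have hFg : F.map (κ n ≫ κp (n + d)) = κ (n + 1) ≫ κp (n + d + 1) := hemb d n
      have hFgh : F.map (κ n ≫ κp (n + d)) ≫ F.map (κ (n + d) ≫ κp n)
          = 𝟙 (F.obj (pob F bot n)) := by
        rw [← F.map_comp, hsec (Nat.le_add_right n d), F.map_id]
      have hFhg : F.map (κ (n + d) ≫ κp n) ≫ F.map (κ n ≫ κp (n + d))
          ≤ 𝟙 (F.obj (pob F bot (n + d))) := by
        rw [← F.map_comp]
        calc F.map ((κ (n + d) ≫ κp n) ≫ (κ n ≫ κp (n + d)))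
            ≤ F.map (𝟙 (pob F bot (n + d))) := hFmono (hretr n (n + d))
          _ = 𝟙 _ := F.map_id _
      refine le_antisymm ?_ ?_
      · calc F.map (κ (n + d) ≫ κp n)
            = (F.map (κ (n + d) ≫ κp n) ≫
              ((κ (n + 1) ≫ κp (n + d + 1)) ≫ (κ (n + d + 1) ≫ κp (n + 1))) : F.obj (pob F bot (n + d)) ⟶ F.obj (pob F bot n)) := by
              erw [hsec (Nat.succ_le_succ (Nat.le_add_right n d))]
              exact (Category.comp_id _).symm
          _ = ((F.map (κ (n + d) ≫ κp n) ≫ F.map (κ n ≫ κp (n + d))) ≫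
              (κ (n + d + 1) ≫ κp (n + 1)) : F.obj (pob F bot (n + d)) ⟶ F.obj (pob F bot n)) := by
              erw [hFg]
              exact (Category.assoc _ _ _).symm
          _ ≤ (𝟙 _ ≫ (κ (n + d + 1) ≫ κp (n + 1)) : F.obj (pob F bot (n + d)) ⟶ F.obj (pob F bot n)) := OCat.comp_mono hFhg le_rfl
          _ = (κ (n + d + 1) ≫ κp (n + 1) : F.obj (pob F bot (n + d)) ⟶ F.obj (pob F bot n)) := Category.id_comp _
      · calc (κ (n + d + 1) ≫ κp (n + 1) : F.obj (pob F bot (n + d)) ⟶ F.obj (pob F bot n))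
            = (((κ (n + d + 1) ≫ κp (n + 1)) ≫ F.map (κ n ≫ κp (n + d))) ≫
              F.map (κ (n + d) ≫ κp n) : F.obj (pob F bot (n + d)) ⟶ F.obj (pob F bot n)) := by
              erw [Category.assoc, hFgh]
              exact (Category.comp_id _).symm
          _ ≤ (𝟙 _ ≫ F.map (κ (n + d) ≫ κp n) : F.obj (pob F bot (n + d)) ⟶ F.obj (pob F bot n)) := by
              refine OCat.comp_mono ?_ le_rfl
              erw [hFg]
              exact hretr (n + 1) (n + d + 1)
          _ = F.map (κ (n + d) ≫ κp n) := Category.id_comp _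
  -- unfold ≫ F (κp n) = κp (n+1)
  have hUmono : ∀ n, Monotone fun m => (κp (m + 1) ≫ F.map (κ m)) ≫ F.map (κp n) :=
    fun n i j h => OCat.comp_mono (hu h) le_rfl
  have hU : ∀ n, ωSup ⟨fun m => κp (m + 1) ≫ F.map (κ m), hu⟩ ≫ F.map (κp n)
      = κp (n + 1) := by
    intro n
    rw [OCat.comp_cont_left (F.map (κp n)) _ (hUmono n)]
    refine le_antisymm (ωSup_le _ _ fun m => ?_) ?_
    · show (κp (m + 1) ≫ F.map (κ m)) ≫ F.map (κp n) ≤ κp (n + 1)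
      have heq : (κp (m + 1) ≫ F.map (κ m)) ≫ F.map (κp n)
          = (κp (m + 1) ≫ κ (m + 1)) ≫ κp (n + 1) := by
        erw [Category.assoc, ← F.map_comp, hGen m n, ← Category.assoc]; rfl
      rw [heq]
      calc (κp (m + 1) ≫ κ (m + 1)) ≫ κp (n + 1) ≤ 𝟙 A ≫ κp (n + 1) :=
          OCat.comp_mono (hκ₂ _) le_rfl
        _ = κp (n + 1) := Category.id_comp _
    · have h1 : (κp (n + 1) ≫ F.map (κ n)) ≫ F.map (κp n) = κp (n + 1) := by
        erw [Category.assoc, ← F.map_comp, hGen n n, hκ₁, Category.comp_id]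
      exact h1.symm.trans_le (le_ωSup ⟨fun m => (κp (m + 1) ≫ F.map (κ m)) ≫ F.map (κp n), hUmono n⟩ n)
  -- diagonal chain for existence
  have hd : Monotone fun k => (β k ≫ κ k) ≫ (κp (k + 1) ≫ F.map (κ k)) :=
    fun i j h => OCat.comp_mono (hρ h) (hu h)
  have hm1 : Monotone fun m =>
      ωSup ⟨fun n => β n ≫ κ n, hρ⟩ ≫ (κp (m + 1) ≫ F.map (κ m)) :=
    fun i j h => OCat.comp_mono le_rfl (hu h)
  have hm2 : ∀ m, Monotone fun n => (β n ≫ κ n) ≫ (κp (m + 1) ≫ F.map (κ m)) :=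
    fun m i j h => OCat.comp_mono (hρ h) le_rfl
  have stepA : ωSup ⟨fun n => β n ≫ κ n, hρ⟩ ≫
      ωSup ⟨fun n => κp (n + 1) ≫ F.map (κ n), hu⟩
      = ωSup ⟨fun k => (β k ≫ κ k) ≫ (κp (k + 1) ≫ F.map (κ k)), hd⟩ := by
    rw [OCat.comp_cont_right _ _ hm1]
    refine le_antisymm (ωSup_le _ _ fun m => ?_) (ωSup_le _ _ fun k => ?_)
    · show ωSup ⟨fun n => β n ≫ κ n, hρ⟩ ≫ (κp (m + 1) ≫ F.map (κ m)) ≤ _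
      rw [OCat.comp_cont_left _ _ (hm2 m)]
      refine ωSup_le _ _ fun n => ?_
      show (β n ≫ κ n) ≫ (κp (m + 1) ≫ F.map (κ m)) ≤ _
      calc (β n ≫ κ n) ≫ (κp (m + 1) ≫ F.map (κ m))
          ≤ (β (max n m) ≫ κ (max n m)) ≫
            (κp (max n m + 1) ≫ F.map (κ (max n m))) :=
            OCat.comp_mono (hρ (le_max_left n m)) (hu (le_max_right n m))
        _ ≤ _ := le_ωSup ⟨fun k => (β k ≫ κ k) ≫ (κp (k + 1) ≫ F.map (κ k)), hd⟩
              (max n m)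
    · show (β k ≫ κ k) ≫ (κp (k + 1) ≫ F.map (κ k)) ≤ _
      calc (β k ≫ κ k) ≫ (κp (k + 1) ≫ F.map (κ k))
          ≤ ωSup ⟨fun n => β n ≫ κ n, hρ⟩ ≫ (κp (k + 1) ≫ F.map (κ k)) :=
            OCat.comp_mono (le_ωSup ⟨fun n => β n ≫ κ n, hρ⟩ k) le_rfl
        _ ≤ _ := le_ωSup ⟨fun m =>
              ωSup ⟨fun n => β n ≫ κ n, hρ⟩ ≫ (κp (m + 1) ≫ F.map (κ m)), hm1⟩ k
  have hmF : Monotone fun n => F.map (β n ≫ κ n) := fun i j h => hFmono (hρ h)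
  have hmb : Monotone fun n => b ≫ F.map (β n ≫ κ n) :=
    fun i j h => OCat.comp_mono le_rfl (hFmono (hρ h))
  have stepC : b ≫ F.map (ωSup ⟨fun n => β n ≫ κ n, hρ⟩)
      = ωSup ⟨fun n => b ≫ F.map (β n ≫ κ n), hmb⟩ := by
    rw [hFcont _ hmF, OCat.comp_cont_right _ _ hmb]
    rfl
  -- the shift identity
  have hshift : ∀ n, b ≫ F.map (β n ≫ κ n)
      = (β (n + 1) ≫ κ (n + 1)) ≫ (κp (n + 1 + 1) ≫ F.map (κ (n + 1))) := by
    intro n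
    have hdk : (β (n + 1) ≫ κ (n + 1)) ≫ (κp (n + 1 + 1) ≫ F.map (κ (n + 1)))
        = β (n + 1) ≫ plink F (ι (F.obj bot)) (n + 1) ≫ F.map (κ (n + 1)) := by
      rw [← hlink (n + 1)]
      exact (Category.assoc (β (n + 1)) (κ (n + 1)) (κp (n + 1 + 1) ≫ F.map (κ (n + 1)))).trans
        (congrArg (β (n + 1) ≫ ·) (Category.assoc (κ (n + 1)) (κp (n + 1 + 1)) (F.map (κ (n + 1)))).symm)
    rw [hdk]
    calc b ≫ F.map (β n ≫ κ n) = b ≫ F.map (β n) ≫ F.map (κ n) := by rw [F.map_comp]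
      _ = β (n + 1) ≫ F.map (κ n) := by rw [hβs n]; exact (Category.assoc _ _ _).symm
      _ = β (n + 1) ≫ F.map (plink F (ι (F.obj bot)) n ≫ κ (n + 1)) := by
          rw [hcocone n]
      _ = β (n + 1) ≫ plink F (ι (F.obj bot)) (n + 1) ≫ F.map (κ (n + 1)) := by
          rw [F.map_comp, plink_succ]; rfl
  refine ⟨?_, ?_⟩
  · -- existence: ρ ≫ unfold = b ≫ F ρ
    rw [stepA, stepC]
    refine le_antisymm (ωSup_le _ _ fun k => ?_) (ωSup_le _ _ fun n => ?_)
    · show (β k ≫ κ k) ≫ (κp (k + 1) ≫ F.map (κ k)) ≤ _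
      calc (β k ≫ κ k) ≫ (κp (k + 1) ≫ F.map (κ k))
          ≤ (β (k + 1) ≫ κ (k + 1)) ≫ (κp (k + 1 + 1) ≫ F.map (κ (k + 1))) :=
            hd (Nat.le_succ k)
        _ = b ≫ F.map (β k ≫ κ k) := (hshift k).symm
        _ ≤ _ := le_ωSup ⟨fun n => b ≫ F.map (β n ≫ κ n), hmb⟩ k
    · show b ≫ F.map (β n ≫ κ n) ≤ _
      calc b ≫ F.map (β n ≫ κ n)
          = (β (n + 1) ≫ κ (n + 1)) ≫ (κp (n + 1 + 1) ≫ F.map (κ (n + 1))) :=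
            hshift n
        _ ≤ _ := le_ωSup ⟨fun k => (β k ≫ κ k) ≫ (κp (k + 1) ≫ F.map (κ k)), hd⟩
              (n + 1)
  · -- uniqueness
    intro ψ hψ
    have hproj : ∀ n, ψ ≫ κp n = β n := by
      intro n
      induction n with
      | zero => rw [hβ₀]; exact hbot _
      | succ n ih =>
        calc (ψ ≫ κp (n + 1) : B ⟶ F.obj (pob F bot n))
            = ψ ≫ ωSup ⟨fun m => κp (m + 1) ≫ F.map (κ m), hu⟩ ≫ F.map (κp n) := by
              rw [hU n]
          _ = (ψ ≫ ωSup ⟨fun m => κp (m + 1) ≫ F.map (κ m), hu⟩) ≫ F.map (κp n) := by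
              rw [Category.assoc]
          _ = (b ≫ F.map ψ) ≫ F.map (κp n) := by rw [hψ]
          _ = b ≫ F.map (ψ ≫ κp n) := by rw [F.map_comp, Category.assoc]
          _ = b ≫ F.map (β n) := by rw [ih]
          _ = @id (B ⟶ F.obj (pob F bot n)) (β (n + 1)) := (hβs n).symm
    have hmψ : Monotone fun n => ψ ≫ (κp n ≫ κ n) :=
      fun i j h => OCat.comp_mono le_rfl (hκmono h)
    calc ψ = ψ ≫ 𝟙 A := (Category.comp_id ψ).symm
      _ = ψ ≫ ωSup ⟨fun n => κp n ≫ κ n, hκmono⟩ := by rw [hκsup]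
      _ = ωSup ⟨fun n => ψ ≫ (κp n ≫ κ n), hmψ⟩ := OCat.comp_cont_right _ _ hmψ
      _ = ωSup ⟨fun n => β n ≫ κ n, hρ⟩ := by
          have hch : (⟨fun n => ψ ≫ (κp n ≫ κ n), hmψ⟩ : Chain (B ⟶ A))
              = ⟨fun n => β n ≫ κ n, hρ⟩ := by
            congr 1
            apply OrderHom.ext
            funext n
            show ψ ≫ (κp n ≫ κ n) = β n ≫ κ n
            rw [← Category.assoc, hproj n]
          rw [hch]
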